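/- Let G be an AH-algebra, let g ∈ G be the supremum (respectively, the infimum) in G of an ascending (respectively, descending) sequence (gₙ)_{n∈ℕ} of pairwise commuting elements of G, and suppose 0 ≤ h ∈ G with hCgₙ for all n ∈ ℕ. Then gh = hg and gh is the supremum (respectively, the infimum) in G of the sequence (gₙh)_{n∈ℕ}. -/

import Mathlib

/-- An e-ring `(R,E)`: an associative ring `R` with unity together with a set `E ⊆ R`
of effects, satisfying the Foulis axioms.  `E⁺` is realized as the additive submonoid
closure of `E` (the set of all finite sums of effects). -/
structure ERing (R : Type*) [Ring R] where
  E : Set R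
  zero_mem : (0 : R) ∈ E
  one_mem : (1 : R) ∈ E
  compl_mem : ∀ e ∈ E, 1 - e ∈ E
  epos_i : ∀ a ∈ AddSubmonoid.closure E, -a ∈ AddSubmonoid.closure E → a = 0
  epos_ii : ∀ a ∈ AddSubmonoid.closure E, 1 - a ∈ AddSubmonoid.closure E → a ∈ E
  epos_iii : ∀ a ∈ AddSubmonoid.closure E, ∀ b ∈ AddSubmonoid.closure E,
    a * b = b * a → a * b ∈ AddSubmonoid.closure E
  epos_iv : ∀ a ∈ AddSubmonoid.closure E, ∀ b ∈ AddSubmonoid.closure E,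
    a * b * a ∈ AddSubmonoid.closure E
  epos_v : ∀ a ∈ AddSubmonoid.closure E, ∀ b ∈ AddSubmonoid.closure E,
    a * b * a = 0 → a * b = 0 ∧ b * a = 0
  epos_vi : ∀ a ∈ AddSubmonoid.closure E, ∀ b ∈ AddSubmonoid.closure E,
    (a - b) ^ 2 ∈ AddSubmonoid.closure E
  zero_ne_one : (0 : R) ≠ 1

namespace ERing

variable {R : Type*} [Ring R] (er : ERing R)

/-- `E⁺`, the set of all finite sums of effects; the positive cone of the directed group. -/
def Epos : Set R := (AddSubmonoid.closure er.E : Set R)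

/-- The directed group `G = E⁺ - E⁺` of the e-ring. -/
def G : Set R := {g | ∃ a ∈ er.Epos, ∃ b ∈ er.Epos, g = a - b}

/-- The partial order on the directed group: `g ≤ h` iff `h - g ∈ E⁺`. -/
def le (g h : R) : Prop := h - g ∈ er.Epos

/-- The set of projections `P = {p ∈ G : p = p²}`. -/
def P : Set R := {p | p ∈ er.G ∧ p = p ^ 2}

/-- The commutant in `G` of a subset `A ⊆ G`. -/
def commutant (A : Set R) : Set R := {g | g ∈ er.G ∧ ∀ a ∈ A, g * a = a * g}

/-- The bicommutant in `G` of a subset `A ⊆ G`. -/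
def CC (A : Set R) : Set R := er.commutant (er.commutant A)

/-- `s` is the supremum of `A` within the subset `S` (w.r.t. the e-ring order). -/
def IsSupIn (S A : Set R) (s : R) : Prop :=
  s ∈ S ∧ (∀ a ∈ A, er.le a s) ∧ ∀ b ∈ S, (∀ a ∈ A, er.le a b) → er.le s b

/-- `s` is the infimum of `A` within the subset `S` (w.r.t. the e-ring order). -/
def IsInfIn (S A : Set R) (s : R) : Prop :=
  s ∈ S ∧ (∀ a ∈ A, er.le s a) ∧ ∀ b ∈ S, (∀ a ∈ A, er.le b a) → er.le b s

/-- Quadratic annihilation property. -/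
def HasQA : Prop := ∀ g ∈ er.G, ∀ h ∈ er.G, g * h ^ 2 * g = 0 → g * h = 0 ∧ h * g = 0

/-- Commutative Vigier property: every ascending sequence of pairwise commuting elements
of `G` bounded above in `G` has a supremum in `G` which double commutes with the sequence. -/
def HasCV : Prop :=
  ∀ g : ℕ → R, (∀ n, g n ∈ er.G) → (∀ n, er.le (g n) (g (n + 1))) →
    (∀ m n, g m * g n = g n * g m) → (∃ b ∈ er.G, ∀ n, er.le (g n) b) →
    ∃ s, er.IsSupIn er.G (Set.range g) s ∧ s ∈ er.CC (Set.range g)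

/-- `G` is an abstract Hermitian (AH) algebra: there is a semitransparent effect `½`,
`G` has quadratic annihilation, and `G` has the commutative Vigier property. -/
def IsAH : Prop := (∃ h ∈ er.E, h + h = 1) ∧ er.HasQA ∧ er.HasCV

end ERing

namespace ERing

variable {R : Type*} [Ring R] (er : ERing R)

lemma Epos_add {a b : R} (ha : a ∈ er.Epos) (hb : b ∈ er.Epos) : a + b ∈ er.Epos :=
  AddSubmonoid.add_mem _ ha hb

lemma Epos_zero : (0 : R) ∈ er.Epos := AddSubmonoid.zero_mem _

lemma Epos_one : (1 : R) ∈ er.Epos := AddSubmonoid.subset_closure er.one_mem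

lemma Epos_nsmul (n : ℕ) {a : R} (ha : a ∈ er.Epos) : n • a ∈ er.Epos :=
  AddSubmonoid.nsmul_mem _ ha n

lemma Epos_natCast (n : ℕ) : (n : R) ∈ er.Epos := by
  simpa [nsmul_eq_mul] using er.Epos_nsmul n er.Epos_one

lemma natCast_mul_Epos (n : ℕ) {a : R} (ha : a ∈ er.Epos) : (n : R) * a ∈ er.Epos := by
  simpa [nsmul_eq_mul] using er.Epos_nsmul n ha

lemma Epos_subset_G {a : R} (ha : a ∈ er.Epos) : a ∈ er.G :=
  ⟨a, ha, 0, er.Epos_zero, by simp⟩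

lemma G_add {a b : R} (ha : a ∈ er.G) (hb : b ∈ er.G) : a + b ∈ er.G := by
  obtain ⟨x, hx, y, hy, rfl⟩ := ha
  obtain ⟨u, hu, v, hv, rfl⟩ := hb
  exact ⟨x + u, er.Epos_add hx hu, y + v, er.Epos_add hy hv, by abel⟩

lemma G_neg {a : R} (ha : a ∈ er.G) : -a ∈ er.G := by
  obtain ⟨x, hx, y, hy, rfl⟩ := ha
  exact ⟨y, hy, x, hx, by abel⟩

lemma G_sub {a b : R} (ha : a ∈ er.G) (hb : b ∈ er.G) : a - b ∈ er.G := by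
  have := er.G_add ha (er.G_neg hb)
  simpa [sub_eq_add_neg] using this

lemma natCast_mul_G (n : ℕ) {a : R} (ha : a ∈ er.G) : (n : R) * a ∈ er.G := by
  obtain ⟨x, hx, y, hy, rfl⟩ := ha
  rw [mul_sub]
  exact ⟨_, er.natCast_mul_Epos n hx, _, er.natCast_mul_Epos n hy, rfl⟩

lemma le_antisymm' {a b : R} (hab : er.le a b) (hba : er.le b a) : a = b := by
  have h0 : b - a = 0 := er.epos_i (b - a) hab (by rw [neg_sub]; exact hba)
  exact (sub_eq_zero.mp h0).symm

lemma sq_mem_Epos {x : R} (hx : x ∈ er.G) : x * x ∈ er.Epos := by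
  obtain ⟨a, ha, b, hb, rfl⟩ := hx
  have := er.epos_vi a ha b hb
  rw [pow_two] at this
  exact this

/-- The halving element: in an AH-algebra `½` exists, lies in `E⁺`, doubles to `1`,
and is central. -/
lemma half_spec (hAH : er.IsAH) :
    ∃ c : R, c ∈ er.Epos ∧ c + c = 1 ∧ ∀ x : R, c * x = x * c := by
  obtain ⟨c, hcE, hc2⟩ := hAH.1
  refine ⟨c, AddSubmonoid.subset_closure hcE, hc2, fun x => ?_⟩
  have key : ∀ a b : R, a + a = b + b → a = b := by
    intro a b hab
    have h2 : ∀ z : R, c * (z + z) = z := by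
      intro z
      calc c * (z + z) = c * z + c * z := by rw [mul_add]
        _ = (c + c) * z := by rw [add_mul]
        _ = z := by rw [hc2, one_mul]
    have h1 : c * (a + a) = c * (b + b) := by rw [hab]
    rw [h2, h2] at h1
    exact h1
  apply key
  have h1 : c * x + c * x = x := by rw [← add_mul, hc2, one_mul]
  have h2 : x * c + x * c = x := by rw [← mul_add, hc2, mul_one]
  rw [h1, h2]

lemma half_mul_Epos {c : R} (hc : c ∈ er.Epos) (hcen : ∀ x : R, c * x = x * c)
    {a : R} (ha : a ∈ er.Epos) : c * a ∈ er.Epos :=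
  er.epos_iii c hc a ha (hcen a)

lemma pow_half_mul_Epos {c : R} (hc : c ∈ er.Epos) (hcen : ∀ x : R, c * x = x * c)
    (m : ℕ) {a : R} (ha : a ∈ er.Epos) : c ^ m * a ∈ er.Epos := by
  induction m with
  | zero => simpa using ha
  | succ k ih =>
    rw [pow_succ', mul_assoc]
    exact er.half_mul_Epos hc hcen ih

lemma pow_half_mul_G {c : R} (hc : c ∈ er.Epos) (hcen : ∀ x : R, c * x = x * c)
    (m : ℕ) {a : R} (ha : a ∈ er.G) : c ^ m * a ∈ er.G := by
  obtain ⟨x, hx, y, hy, rfl⟩ := ha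
  rw [mul_sub]
  exact ⟨_, er.pow_half_mul_Epos hc hcen m hx, _, er.pow_half_mul_Epos hc hcen m hy, rfl⟩

lemma mul_mem_G {c : R} (hcE : c ∈ er.Epos) (hc2 : c + c = 1) (hcen : ∀ x : R, c * x = x * c)
    {x y : R} (hx : x ∈ er.G) (hy : y ∈ er.G) (hxy : x * y = y * x) : x * y ∈ er.G := by
  have hu : (x + y) * (x + y) ∈ er.Epos := er.sq_mem_Epos (er.G_add hx hy)
  have hv : (x - y) * (x - y) ∈ er.Epos := er.sq_mem_Epos (er.G_sub hx hy)
  have half : ∀ z : R, c * (z + z) = z := by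
    intro z
    calc c * (z + z) = c * z + c * z := by rw [mul_add]
      _ = (c + c) * z := by rw [add_mul]
      _ = z := by rw [hc2, one_mul]
  have e : (x + y) * (x + y) - (x - y) * (x - y) = (x * y + x * y) + (x * y + x * y) := by
    have h' : (x + y) * (x + y) - (x - y) * (x - y) = (x * y + y * x) + (x * y + y * x) := by
      noncomm_ring
    rw [h', hxy]
  have key : x * y = c * (c * ((x + y) * (x + y))) - c * (c * ((x - y) * (x - y))) := by
    rw [← mul_sub, ← mul_sub, e, half, half]
  rw [key]
  exact er.G_sub
    (er.Epos_subset_G (er.half_mul_Epos hcE hcen (er.half_mul_Epos hcE hcen hu)))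
    (er.Epos_subset_G (er.half_mul_Epos hcE hcen (er.half_mul_Epos hcE hcen hv)))

lemma exists_pow_bound {h : R} (hh : h ∈ er.Epos) :
    ∃ m : ℕ, ((2 ^ m : ℕ) : R) - h ∈ er.Epos := by
  have hn : ∃ n : ℕ, (n : R) - h ∈ er.Epos := by
    induction hh using AddSubmonoid.closure_induction with
    | mem x hx => exact ⟨1, by rw [Nat.cast_one]; exact AddSubmonoid.subset_closure (er.compl_mem x hx)⟩
    | zero => exact ⟨0, by simpa using er.Epos_zero⟩
    | add x y hx hy ihx ihy =>
      obtain ⟨n1, h1⟩ := ihx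
      obtain ⟨n2, h2⟩ := ihy
      refine ⟨n1 + n2, ?_⟩
      have hsum := er.Epos_add h1 h2
      have e : ((n1 + n2 : ℕ) : R) - (x + y) = ((n1 : R) - x) + ((n2 : R) - y) := by
        push_cast
        abel
      rw [e]
      exact hsum
  obtain ⟨n, hn⟩ := hn
  refine ⟨n, ?_⟩
  have hle : n ≤ 2 ^ n := Nat.le_of_lt (Nat.lt_two_pow_self (n := n))
  have h1 : ((2 ^ n - n : ℕ) : R) ∈ er.Epos := er.Epos_natCast _
  have hsum := er.Epos_add h1 hn
  have e : ((2 ^ n : ℕ) : R) - h = ((2 ^ n - n : ℕ) : R) + ((n : R) - h) := by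
    rw [Nat.cast_sub hle]
    abel
  rw [e]
  exact hsum

/-- The supremum half of the statement. -/
lemma sup_case (hAH : er.IsAH)
    (gseq : ℕ → R) (g h : R)
    (hgseq : ∀ n, gseq n ∈ er.G)
    (hcomm : ∀ m n, gseq m * gseq n = gseq n * gseq m)
    (hh : h ∈ er.G) (hh0 : er.le 0 h)
    (hhC : ∀ n, h * gseq n = gseq n * h)
    (hasc : ∀ n, er.le (gseq n) (gseq (n + 1)))
    (hsup : er.IsSupIn er.G (Set.range gseq) g) :
    g * h = h * g ∧ er.IsSupIn er.G (Set.range fun n => gseq n * h) (g * h) := by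
  obtain ⟨c, hcE, hc2, hcen⟩ := er.half_spec hAH
  obtain ⟨hgG, hub, hlub⟩ := hsup
  have hEh : h ∈ er.Epos := by
    have := hh0
    simp only [ERing.le, sub_zero] at this
    exact this
  have hubn : ∀ n, er.le (gseq n) g := fun n => hub _ ⟨n, rfl⟩
  -- `g` lies in the bicommutant of the sequence, hence commutes with `h`
  obtain ⟨s, hs, hsCC⟩ := hAH.2.2 gseq hgseq hasc hcomm ⟨g, hgG, hubn⟩
  have hgs : g = s := er.le_antisymm' (hlub s hs.1 hs.2.1) (hs.2.2 g hgG (fun a ha => by obtain ⟨n, rfl⟩ := ha; exact hubn n))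
  have ghc : g * h = h * g := by
    rw [hgs]
    exact hsCC.2 h ⟨hh, fun a ha => by obtain ⟨n, rfl⟩ := ha; exact hhC n⟩
  refine ⟨ghc, er.mul_mem_G hcE hc2 hcen hgG hh ghc, ?_, ?_⟩
  · rintro a ⟨n, rfl⟩
    show g * h - gseq n * h ∈ er.Epos
    have hd : g - gseq n ∈ er.Epos := hubn n
    have hcom : (g - gseq n) * h = h * (g - gseq n) := by
      rw [sub_mul, mul_sub, ghc, hhC n]
    have hp := er.epos_iii _ hd h hEh hcom
    rw [sub_mul] at hp
    exact hp
  · intro b hbG hbub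
    obtain ⟨m, hm⟩ := er.exists_pow_bound hEh
    set K : R := ((2 ^ m : ℕ) : R) with hKdef
    have hKcen : ∀ x : R, K * x = x * K := fun x => (Nat.cast_commute _ x).eq
    have hcmK : c ^ m * K = 1 := by
      have hc2' : c * 2 = 1 := by rw [mul_two, hc2]
      have hcm : Commute c (2 : R) := hcen 2
      rw [hKdef, Nat.cast_pow, Nat.cast_ofNat, ← hcm.mul_pow, hc2', one_pow]
    set t : R := b + K * g - g * h with ht
    have htG : t ∈ er.G :=
      er.G_sub (er.G_add hbG (er.natCast_mul_G _ hgG)) (er.mul_mem_G hcE hc2 hcen hgG hh ghc)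
    have htn : ∀ n, t - K * gseq n ∈ er.Epos := by
      intro n
      have hKh : K - h ∈ er.Epos := hm
      have hcom : (g - gseq n) * (K - h) = (K - h) * (g - gseq n) := by
        simp only [sub_mul, mul_sub]
        rw [← hKcen g, ← hKcen (gseq n), ghc, hhC n]
        abel
      have hpn := er.epos_iii _ (hubn n) _ hKh hcom
      have hb' : b - gseq n * h ∈ er.Epos := hbub _ ⟨n, rfl⟩
      have e : t - K * gseq n = (b - gseq n * h) + (g - gseq n) * (K - h) := by
        rw [ht]
        simp only [sub_mul, mul_sub]
        rw [← hKcen g, ← hKcen (gseq n)]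
        abel
      rw [e]
      exact er.Epos_add hb' hpn
    set t' : R := c ^ m * t with ht'
    have ht'G : t' ∈ er.G := er.pow_half_mul_G hcE hcen m htG
    have hlb : ∀ n, er.le (gseq n) t' := by
      intro n
      show t' - gseq n ∈ er.Epos
      have hmem := er.pow_half_mul_Epos hcE hcen m (htn n)
      have e : c ^ m * (t - K * gseq n) = t' - gseq n := by
        rw [mul_sub, ← mul_assoc, hcmK, one_mul, ht']
      rwa [e] at hmem
    have hgt' : er.le g t' := hlub t' ht'G (by rintro a ⟨n, rfl⟩; exact hlb n)
    show b - g * h ∈ er.Epos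
    have hK' : K * (t' - g) ∈ er.Epos := by
      have : t' - g ∈ er.Epos := hgt'
      rw [hKdef]
      exact er.natCast_mul_Epos _ this
    have e : K * (t' - g) = b - g * h := by
      rw [mul_sub, ht', ← mul_assoc, hKcen (c ^ m), hcmK, one_mul, ht]
      abel
    rwa [e] at hK'

end ERing

/-- In an AH-algebra, if `g` is the supremum (resp. infimum) in `G` of
an ascending (resp. descending) sequence `(gₙ)` of pairwise commuting elements, and
`0 ≤ h ∈ G` commutes with every `gₙ`, then `gh = hg` is the supremum (resp. infimum)
in `G` of `(gₙh)`. -/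
theorem stmt5 {R : Type*} [Ring R] (er : ERing R) (hAH : er.IsAH)
    (gseq : ℕ → R) (g h : R)
    (hgseq : ∀ n, gseq n ∈ er.G)
    (hcomm : ∀ m n, gseq m * gseq n = gseq n * gseq m)
    (hh : h ∈ er.G) (hh0 : er.le 0 h)
    (hhC : ∀ n, h * gseq n = gseq n * h) :
    ((∀ n, er.le (gseq n) (gseq (n + 1))) → er.IsSupIn er.G (Set.range gseq) g →
      g * h = h * g ∧ er.IsSupIn er.G (Set.range fun n => gseq n * h) (g * h)) ∧
    ((∀ n, er.le (gseq (n + 1)) (gseq n)) → er.IsInfIn er.G (Set.range gseq) g →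
      g * h = h * g ∧ er.IsInfIn er.G (Set.range fun n => gseq n * h) (g * h)) := by
  constructor
  · intro hasc hsup
    exact er.sup_case hAH gseq g h hgseq hcomm hh hh0 hhC hasc hsup
  · intro hdesc hinf
    obtain ⟨hgG, hlbd, hglb⟩ := hinf
    have hsup' : er.IsSupIn er.G (Set.range fun n => -gseq n) (-g) := by
      refine ⟨er.G_neg hgG, ?_, ?_⟩
      · rintro a ⟨n, rfl⟩
        show -g - -gseq n ∈ er.Epos
        have h1 : gseq n - g ∈ er.Epos := hlbd _ ⟨n, rfl⟩
        rw [show -g - -gseq n = gseq n - g by abel]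
        exact h1
      · intro b hbG hb
        show b - -g ∈ er.Epos
        have h1 : er.le (-b) g := by
          refine hglb (-b) (er.G_neg hbG) ?_
          rintro a ⟨n, rfl⟩
          show gseq n - -b ∈ er.Epos
          have h2 : b - -gseq n ∈ er.Epos := hb _ ⟨n, rfl⟩
          rw [show gseq n - -b = b - -gseq n by abel]
          exact h2
        have h1' : g - -b ∈ er.Epos := h1
        rw [show b - -g = g - -b by abel]
        exact h1'
    have hres := er.sup_case hAH (fun n => -gseq n) (-g) h
      (fun n => er.G_neg (hgseq n))
      (fun m n => by simp only [neg_mul_neg]; exact hcomm m n)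
      hh hh0
      (fun n => by simp only [mul_neg, neg_mul]; rw [hhC n])
      (fun n => by
        show -gseq (n + 1) - -gseq n ∈ er.Epos
        have h1 : gseq n - gseq (n + 1) ∈ er.Epos := hdesc n
        rw [show -gseq (n + 1) - -gseq n = gseq n - gseq (n + 1) by abel]
        exact h1)
      hsup'
    obtain ⟨hngh, hres2⟩ := hres
    have ghc : g * h = h * g := by
      have := hngh
      rw [neg_mul, mul_neg, neg_inj] at this
      exact this
    obtain ⟨hmG, hub', hlub'⟩ := hres2
    refine ⟨ghc, ?_, ?_, ?_⟩
    · have h1 : -(g * h) ∈ er.G := by rw [← neg_mul]; exact hmG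
      have h2 := er.G_neg h1
      rwa [neg_neg] at h2
    · rintro a ⟨n, rfl⟩
      show gseq n * h - g * h ∈ er.Epos
      have h1 : -g * h - -gseq n * h ∈ er.Epos := hub' _ ⟨n, rfl⟩
      rw [show gseq n * h - g * h = -g * h - -gseq n * h by rw [neg_mul, neg_mul]; abel]
      exact h1
    · intro b hbG hb
      show g * h - b ∈ er.Epos
      have h1 : -b - -g * h ∈ er.Epos := by
        refine hlub' (-b) (er.G_neg hbG) ?_
        rintro a ⟨n, rfl⟩
        show -b - -gseq n * h ∈ er.Epos
        have h2 : gseq n * h - b ∈ er.Epos := hb _ ⟨n, rfl⟩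
        rw [show -b - -gseq n * h = gseq n * h - b by rw [neg_mul]; abel]
        exact h2
      rw [show g * h - b = -b - -g * h by rw [neg_mul]; abel]
      exact h1
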